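/- Let α be irrational and not a Liouville number. Then there exist a constant C₁ > 0 and a positive integer N such that for all complex z, |sin z| + |sin(α z)| ≥ C₁·|z|·(1+|z|)^(−N). -/

import Mathlib

open Real

private lemma zpow_neg_natCast' (b : ℝ) (N : ℕ) : b ^ (-(N:ℤ)) = 1 / b ^ N := by
  rw [zpow_neg, zpow_natCast, one_div]

-- diophantine bound
private lemma keyB {α : ℝ} (hirr : Irrational α) (hL : ¬ Liouville α) :
    ∃ c₀ : ℝ, 0 < c₀ ∧ c₀ ≤ 1 ∧ ∃ n : ℕ, 0 < n ∧ ∀ p q : ℤ, p ≠ 0 →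
      c₀ / |(p:ℝ)| ^ n ≤ |(p:ℝ) * α - (q:ℝ)| := by
  simp only [Liouville, not_forall, not_exists] at hL
  obtain ⟨n, hn⟩ := hL
  have hirr' : ∀ a b : ℤ, b ≠ 0 → α ≠ (a:ℝ)/(b:ℝ) := by
    intro a b hb h
    exact hirr ⟨(a:ℚ)/(b:ℚ), by push_cast; rw [← h]⟩
  have hδ : 0 < |α - (round α : ℝ)| := by
    rw [abs_pos, sub_ne_zero]
    intro h
    exact hirr ⟨(round α : ℚ), by push_cast; rw [← h]⟩
  set δ := |α - (round α : ℝ)| with hδdef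
  refine ⟨min δ 1, lt_min hδ one_pos, min_le_right _ _, n + 1, Nat.succ_pos _, ?_⟩
  intro p q hp
  have hp1 : (1:ℝ) ≤ |(p:ℝ)| := by
    rw [← Int.cast_abs]
    exact_mod_cast Int.one_le_abs hp
  have hp0 : (0:ℝ) < |(p:ℝ)| := by linarith
  rcases eq_or_lt_of_le hp1 with h1 | h2
  · -- |p| = 1
    have hpsq : (p:ℝ) * (p:ℝ) = 1 := by
      have : |(p:ℝ)| ^ 2 = 1 := by rw [← h1]; ring
      rw [sq_abs] at this; nlinarith
    have h3 : |(p:ℝ) * α - (q:ℝ)| = |α - ((p*q : ℤ):ℝ)| := by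
      push_cast
      rw [show α - (p:ℝ)*(q:ℝ) = (p:ℝ) * ((p:ℝ)*α - q) by linear_combination (-α) * hpsq,
        abs_mul, ← h1]
      ring
    have h4 : δ ≤ |α - ((p*q : ℤ):ℝ)| := round_le α (p*q)
    calc min δ 1 / |(p:ℝ)| ^ (n+1) = min δ 1 := by rw [← h1]; simp
      _ ≤ δ := min_le_left _ _
      _ ≤ _ := by rw [h3]; exact h4
  · -- |p| > 1
    have hb : (1:ℤ) < |p| := by
      have := h2; rw [← Int.cast_abs] at this; exact_mod_cast this
    have hnn := hn (q * p.sign) |p|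
    rw [not_and_or, not_and_or] at hnn
    have hq : ((q * p.sign : ℤ):ℝ) / ((|p| : ℤ):ℝ) = (q:ℝ)/(p:ℝ) := by
      rcases lt_trichotomy p 0 with h | h | h
      · rw [Int.sign_eq_neg_one_of_neg h, abs_of_neg h]
        push_cast; rw [div_neg_eq_neg_div, ← neg_div_neg_eq]; ring_nf
      · exact absurd h hp
      · rw [Int.sign_eq_one_of_pos h, abs_of_pos h]; push_cast; ring_nf
    have hne : α ≠ ((q * p.sign : ℤ):ℝ) / ((|p| : ℤ):ℝ) :=
      hirr' _ _ (by simp [hp])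
    have hkey : 1 / ((|p|:ℤ):ℝ) ^ n ≤ |α - ((q * p.sign : ℤ):ℝ) / ((|p| : ℤ):ℝ)| := by
      rcases hnn with h | h | h
      · exact absurd hb h
      · exact absurd hne h
      · exact le_of_not_gt h
    rw [hq, show ((|p|:ℤ):ℝ) = |(p:ℝ)| by push_cast; ring] at hkey
    have hpa : |α - (q:ℝ)/(p:ℝ)| * |(p:ℝ)| = |(p:ℝ) * α - q| := by
      rw [← abs_mul]
      congr 1
      have : (p:ℝ) ≠ 0 := by exact_mod_cast hp
      field_simp
    calc min δ 1 / |(p:ℝ)| ^ (n+1) ≤ 1 / |(p:ℝ)| ^ n := by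
          rw [div_le_div_iff₀ (by positivity) (by positivity)]
          calc min δ 1 * |(p:ℝ)| ^ n ≤ 1 * |(p:ℝ)| ^ n := by
                gcongr; exact min_le_right _ _
            _ ≤ |(p:ℝ)| ^ (n+1) := by
                rw [one_mul, pow_succ]
                nlinarith [pow_pos hp0 n]
            _ = 1 * |(p:ℝ)| ^ (n+1) := (one_mul _).symm
      _ ≤ |α - (q:ℝ)/(p:ℝ)| := hkey
      _ ≤ |α - (q:ℝ)/(p:ℝ)| * |(p:ℝ)| := le_mul_of_one_le_right (abs_nonneg _) hp1
      _ = |(p:ℝ) * α - q| := hpa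

-- |sin x| ≥ 2 * distance of x/π to nearest integer
private lemma sin_lb (x : ℝ) : 2 * |x/π - (round (x/π) : ℝ)| ≤ |Real.sin x| := by
  have hπ := Real.pi_pos
  set p := round (x/π) with hp
  have h0 : |x/π - (p:ℝ)| ≤ 1/2 := abs_sub_round (x/π)
  have h1 : |x - p*π| ≤ π/2 := by
    have hx : x - p*π = (x/π - p) * π := by field_simp
    rw [hx, abs_mul, abs_of_pos hπ]
    calc |x/π - (p:ℝ)| * π ≤ (1/2) * π := by gcongr
      _ = π/2 := by ring
  have h2 : |Real.sin x| = |Real.sin (x - p*π)| := by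
    have := Real.sin_add_int_mul_pi (x - p*π) p
    rw [show x - p*π + p*π = x by ring] at this
    rw [this, abs_mul]
    rcases Int.even_or_odd p with he | ho
    · rw [he.neg_one_zpow]; simp
    · rw [Odd.neg_one_zpow ho]; simp
  have h3 := Real.mul_abs_le_abs_sin h1
  rw [← h2] at h3
  calc 2 * |x/π - (p:ℝ)| = 2/π * (|x/π - (p:ℝ)| * π) := by
        rw [mul_comm (|x/π - (p:ℝ)|) π, ← mul_assoc]
        congr 1
        field_simp
    _ = 2/π * |x - p*π| := by
        congr 1
        rw [show x - p*π = (x/π - p) * π by field_simp, abs_mul, abs_of_pos hπ]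
    _ ≤ |Real.sin x| := h3

-- lower bounds on |sin z| for complex z
private lemma abs_sin_sq (x y : ℝ) :
    (‖Complex.sin (x + y * Complex.I)‖)^2
      = (Real.sin x * Real.cosh y)^2 + (Real.cos x * Real.sinh y)^2 := by
  have h : Complex.sin (x + y * Complex.I)
      = Complex.ofReal (Real.sin x * Real.cosh y)
        + Complex.ofReal (Real.cos x * Real.sinh y) * Complex.I := by
    rw [Complex.sin_add, Complex.cos_mul_I, Complex.sin_mul_I]
    push_cast
    ring
  rw [h, Complex.sq_norm, Complex.normSq_add_mul_I]

private lemma re_le_abs_sin (z : ℂ) : |Real.sin z.re| ≤ ‖Complex.sin z‖ := by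
  have h := abs_sin_sq z.re z.im
  rw [Complex.re_add_im] at h
  have h1 := Real.one_le_cosh z.im
  have h2 := norm_nonneg (Complex.sin z)
  have hsq : |Real.sin z.re| ^ 2 ≤ (‖Complex.sin z‖) ^ 2 := by
    rw [sq_abs]
    nlinarith [sq_nonneg (Real.cos z.re * Real.sinh z.im), sq_nonneg (Real.sin z.re),
      sq_nonneg (Real.sin z.re * Real.sinh z.im), Real.cosh_sq z.im]
  exact (abs_le_of_sq_le_sq' hsq h2).2

private lemma im_le_abs_sin (z : ℂ) : |z.im| ≤ ‖Complex.sin z‖ := by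
  have h := abs_sin_sq z.re z.im
  rw [Complex.re_add_im] at h
  have h2 := norm_nonneg (Complex.sin z)
  have h3 : |z.im| ≤ |Real.sinh z.im| := by
    rw [Real.abs_sinh]
    calc |z.im| ≤ Real.sinh |z.im| := Real.self_le_sinh_iff.2 (abs_nonneg _)
      _ = Real.sinh |z.im| := rfl
  have h4 : Real.sinh z.im ^ 2 ≤ (‖Complex.sin z‖)^2 := by
    have := Real.sin_sq_add_cos_sq z.re
    have := Real.cosh_sq z.im
    nlinarith [sq_nonneg (Real.sinh z.im), sq_nonneg (Real.sin z.re * Real.sinh z.im)]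
  have hsq : |z.im| ^ 2 ≤ (‖Complex.sin z‖) ^ 2 := by
    rw [sq_abs]
    nlinarith [sq_abs z.im, sq_abs (Real.sinh z.im), abs_nonneg (Real.sinh z.im),
      abs_nonneg z.im, h3]
  exact (abs_le_of_sq_le_sq' hsq h2).2



private lemma real_est {α : ℝ} (hirr : Irrational α) (hL : ¬ Liouville α) :
    ∃ C : ℝ, 0 < C ∧ ∃ N : ℕ, 0 < N ∧ ∀ x : ℝ,
      C * |x| * (1 + |x|) ^ (-(N:ℤ)) ≤ |Real.sin x| + |Real.sin (α * x)| := by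
  obtain ⟨c₀, hc₀, hc₀1, n, hn, hB⟩ := keyB hirr hL
  have hα1 : (0:ℝ) < 1 + |α| := by positivity
  set c₂ := min 1 (c₀ / (1 + |α|)) with hc₂def
  have hc₂ : 0 < c₂ := lt_min one_pos (by positivity)
  have hc₂1 : c₂ ≤ 1 := min_le_left _ _
  -- key diophantine estimate on distances to nearest integers
  have key : ∀ t : ℝ, c₂ * |t| / (1 + |t|) ^ (n+1)
      ≤ |t - (round t : ℝ)| + |α * t - (round (α*t) : ℝ)| := by
    intro t
    set p := round t with hpdef
    set q := round (α*t) with hqdef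
    have ht1 : (0:ℝ) < 1 + |t| := by positivity
    have ht1' : (1:ℝ) ≤ 1 + |t| := by simp [abs_nonneg]
    have hD : (0:ℝ) ≤ |t - (p:ℝ)| + |α*t - (q:ℝ)| := by positivity
    by_cases hp : p = 0
    · have h1 : |t| ≤ |t - (p:ℝ)| + |α*t - (q:ℝ)| := by
        rw [hp]
        push_cast
        rw [sub_zero]
        exact le_add_of_nonneg_right (abs_nonneg _)
      calc c₂ * |t| / (1 + |t|) ^ (n+1) ≤ 1 * |t| / 1 := by
            gcongr
            · exact one_le_pow₀ ht1'
      _ = |t| := by ring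
      _ ≤ _ := h1
    · have hp1 : (1:ℝ) ≤ |(p:ℝ)| := by
        rw [← Int.cast_abs]; exact_mod_cast Int.one_le_abs hp
      have habs : |(p:ℝ)| ≤ 1 + |t| := by
        have h0 : |t - (p:ℝ)| ≤ 1/2 := abs_sub_round t
        have := abs_sub_abs_le_abs_sub (p:ℝ) t
        rw [abs_sub_comm (p:ℝ) t] at this
        linarith
      have h2 : |(p:ℝ)*α - q| ≤ (1+|α|) * (|t - (p:ℝ)| + |α*t - (q:ℝ)|) := by
        have he : (p:ℝ)*α - q = α*((p:ℝ) - t) + (α*t - q) := by ring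
        calc |(p:ℝ)*α - q| ≤ |α*((p:ℝ) - t)| + |α*t - (q:ℝ)| := by
              rw [he]; exact abs_add_le _ _
          _ = |α| * |t - (p:ℝ)| + |α*t - (q:ℝ)| := by
              rw [abs_mul, abs_sub_comm]
          _ ≤ (1+|α|) * (|t - (p:ℝ)| + |α*t - (q:ℝ)|) := by
              nlinarith [abs_nonneg α, abs_nonneg (t - (p:ℝ)), abs_nonneg (α*t - (q:ℝ))]
      have hD2 : c₀ / ((1+|α|) * (1+|t|)^n) ≤ |t - (p:ℝ)| + |α*t - (q:ℝ)| := by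
        rw [div_le_iff₀ (by positivity)]
        have e1 : c₀ ≤ |(p:ℝ)*α - (q:ℝ)| * |(p:ℝ)|^n := by
          have := hB p q hp
          rw [div_le_iff₀ (by positivity)] at this
          exact this
        calc c₀ ≤ |(p:ℝ)*α - (q:ℝ)| * |(p:ℝ)|^n := e1
          _ ≤ ((1+|α|) * (|t - (p:ℝ)| + |α*t - (q:ℝ)|)) * (1+|t|)^n := by
              gcongr
          _ = (|t - (p:ℝ)| + |α*t - (q:ℝ)|) * ((1+|α|) * (1+|t|)^n) := by ring
      calc c₂ * |t| / (1 + |t|) ^ (n+1) ≤ (c₀/(1+|α|)) * (1+|t|) / (1+|t|)^(n+1) := by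
            gcongr
            · exact min_le_right _ _
            · linarith [abs_nonneg t]
        _ = c₀ / ((1+|α|) * (1+|t|)^n) := by
            rw [pow_succ]
            field_simp
        _ ≤ _ := hD2
  -- convert to sines
  refine ⟨2 * c₂ / π, by positivity, n + 1, Nat.succ_pos _, ?_⟩
  intro x
  have hπ := Real.pi_pos
  have hπ1 := Real.one_le_pi_div_two -- maybe not needed
  set t := x / π with htdef
  have hat : α * x / π = α * t := by rw [htdef]; ring
  have h1 := sin_lb x
  have h2 := sin_lb (α * x)
  rw [hat] at h2
  have h3 : 2 * (|t - (round t : ℝ)| + |α*t - (round (α*t) : ℝ)|)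
      ≤ |Real.sin x| + |Real.sin (α * x)| := by
    have e1 : |x/π - (round (x/π) : ℝ)| = |t - (round t : ℝ)| := by rw [htdef]
    rw [e1] at h1
    linarith
  have h4 := key t
  have htx : |t| = |x| / π := by rw [htdef, abs_div, abs_of_pos hπ]
  have htx2 : 1 + |t| ≤ 1 + |x| := by
    rw [htx]
    have : |x| / π ≤ |x| := by
      rw [div_le_iff₀ hπ]
      nlinarith [abs_nonneg x, Real.pi_gt_three]
    linarith
  rw [zpow_neg_natCast', ← div_eq_mul_one_div]
  calc 2 * c₂ / π * |x| / (1+|x|)^(n+1) = 2 * (c₂ * (|x|/π) / (1+|x|)^(n+1)) := by ring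
    _ ≤ 2 * (c₂ * |t| / (1+|t|)^(n+1)) := by
        rw [htx]
        gcongr
        rw [div_le_iff₀ hπ]
        nlinarith [abs_nonneg x, Real.pi_gt_three]
    _ ≤ 2 * (|t - (round t : ℝ)| + |α*t - (round (α*t) : ℝ)|) := by linarith
    _ ≤ _ := h3



/-- If α is irrational and not Liouville, there exist C₁ > 0 and a positive
integer N such that |sin z| + |sin(α z)| ≥ C₁ |z| (1+|z|)^(−N) for all z ∈ ℂ. -/
theorem stmt9 {α : ℝ} (hirr : Irrational α) (hL : ¬ Liouville α) :
    ∃ C₁ : ℝ, 0 < C₁ ∧ ∃ N : ℕ, 0 < N ∧ ∀ z : ℂ,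
      ‖Complex.sin z‖ + ‖Complex.sin ((α : ℂ) * z)‖ ≥
        C₁ * ‖z‖ * (1 + ‖z‖) ^ (-(N : ℤ)) := by
  obtain ⟨C, hC, N, hN, hreal⟩ := real_est hirr hL
  refine ⟨min C 1 / 2, by positivity, N, hN, ?_⟩
  intro z
  set x := z.re with hx
  set y := z.im with hy
  set A := ‖Complex.sin z‖ with hA
  set B := ‖Complex.sin ((α:ℂ) * z)‖ with hB
  set az := ‖z‖ with haz
  have hA0 : 0 ≤ A := norm_nonneg _
  have hB0 : 0 ≤ B := norm_nonneg _
  have haz0 : 0 ≤ az := norm_nonneg _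
  have h1 : |Real.sin x| ≤ A := re_le_abs_sin z
  have hre : ((α:ℂ) * z).re = α * x := by simp [Complex.mul_re, hx]
  have h2 : |Real.sin (α * x)| ≤ B := by
    have := re_le_abs_sin ((α:ℂ) * z)
    rwa [hre] at this
  have h3 : |y| ≤ A := im_le_abs_sin z
  have hxz : |x| ≤ az := Complex.abs_re_le_norm z
  have hyz : |y| ≤ az := Complex.abs_im_le_norm z
  have hzxy : az ≤ |x| + |y| := Complex.norm_le_abs_re_add_abs_im z
  have hr := hreal x
  set S := (1 + az) ^ (-(N:ℤ)) with hS
  have haz1 : (0:ℝ) < 1 + az := by positivity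
  have hS0 : 0 < S := by rw [hS, zpow_neg_natCast']; positivity
  have hS1 : S ≤ 1 := by
    rw [hS, zpow_neg_natCast']
    rw [div_le_one (by positivity)]
    exact one_le_pow₀ (by linarith)
  have hS2 : C * |x| * S ≤ C * |x| * (1 + |x|) ^ (-(N:ℤ)) := by
    rw [hS, zpow_neg_natCast', zpow_neg_natCast']
    gcongr
  have t4 : C * |x| * S ≤ A + B := by
    calc C * |x| * S ≤ C * |x| * (1 + |x|) ^ (-(N:ℤ)) := hS2
      _ ≤ |Real.sin x| + |Real.sin (α * x)| := hr
      _ ≤ A + B := add_le_add h1 h2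
  have t3 : min C 1 * |x| * S ≤ C * |x| * S := by
    gcongr
    exact min_le_left _ _
  have t5 : min C 1 * |y| * S ≤ |y| := by
    calc min C 1 * |y| * S ≤ 1 * |y| * 1 := by
          gcongr
          exact min_le_right _ _
      _ = |y| := by ring
  have t6 : |y| ≤ A + B := le_trans h3 (le_add_of_nonneg_right hB0)
  have t1 : min C 1 * (az * S) ≤ min C 1 * ((|x| + |y|) * S) := by
    have hm0 : 0 ≤ min C 1 := le_min hC.le one_pos.le
    gcongr
  have goal2 : min C 1 * (az * S) ≤ 2 * (A + B) := by
    have := t1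
    nlinarith [t3, t4, t5, t6]
  calc min C 1 / 2 * az * S = (min C 1 * (az * S)) / 2 := by ring
    _ ≤ (2 * (A + B)) / 2 := by linarith
    _ = A + B := by ring
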